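/- In weighted A* with heuristic inflation factor w ≥ 1 and a consistent heuristic h, when a vertex s is selected for expansion (i.e., it has minimal key g(s)+w·h(s) in the open list), its g-value satisfies g(s) ≤ w · g*(s), where g*(s) is the optimal cost from the start to s. Formally: if every vertex on some optimal path to s that is not yet expanded has key at least g(s)+w·h(s), then g(s) ≤ w·g*(s). -/
import Mathlib


variable {V : Type*}

/-- In weighted A* with inflation `w ≥ 1` and consistent heuristic `h`: when `s` is
selected for expansion (every not-yet-expanded vertex on some optimal path to `s`
has key at least `g s + w * h s`), its `g`-value satisfies `g s ≤ w * g* s`. -/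
theorem weightedAstar_expansion_bound [Fintype V]
    (E : V → V → Prop) (c : V → V → ℝ) (g gstar h : V → ℝ) (w : ℝ)
    (s0 s : V) (Expanded : Set V) (n : ℕ) (p : ℕ → V)
    (hw : 1 ≤ w)
    (hh_nonneg : ∀ v, 0 ≤ h v)
    (hc_nonneg : ∀ u v, E u v → 0 ≤ c u v)
    (h_cons : ∀ u v, E u v → h u ≤ c u v + h v)
    -- `p` is an optimal path from `s0` to `s`
    (hp0 : p 0 = s0) (hpn : p n = s)
    (h_edge : ∀ i < n, E (p i) (p (i + 1)))
    (hgstar0 : gstar s0 = 0)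
    (hgstar_nonneg : ∀ v, 0 ≤ gstar v)
    (h_opt : ∀ i < n, gstar (p (i + 1)) = gstar (p i) + c (p i) (p (i + 1)))
    -- algorithm state
    (hg0 : g s0 = 0)
    (hs0_exp : s0 ∈ Expanded)
    (h_inv : ∀ u ∈ Expanded, ∀ v, E u v → g v ≤ g u + c u v)
    -- `s` has minimal key among open vertices on the path
    (h_key : ∀ i ≤ n, p i ∉ Expanded → g s + w * h s ≤ g (p i) + w * h (p i)) :
    g s ≤ w * gstar s := by

  -- claim1: if all vertices before `j` are expanded then `g (p j) ≤ gstar (p j)`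
  have claim1 : ∀ j, j ≤ n → (∀ k < j, p k ∈ Expanded) → g (p j) ≤ gstar (p j) := by
    intro j
    induction j with
    | zero => intro _ _; rw [hp0, hg0, hgstar0]
    | succ j ih =>
      intro hjn hall
      have hj : j < n := Nat.lt_of_succ_le hjn
      have h1 : g (p (j+1)) ≤ g (p j) + c (p j) (p (j+1)) :=
        h_inv _ (hall j (Nat.lt_succ_self j)) _ (h_edge j hj)
      have h2 : g (p j) ≤ gstar (p j) :=
        ih (le_of_lt hj) (fun k hk => hall k (Nat.lt_succ_of_lt hk))
      rw [h_opt j hj]; linarith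
  -- claim2: heuristic consistency along the tail of path
  have claim2 : ∀ i d, i + d ≤ n → h (p i) ≤ (gstar (p (i+d)) - gstar (p i)) + h (p (i+d)) := by
    intro i d
    induction d with
    | zero => intro _; simp
    | succ d ih =>
      intro hle
      have hid : i + d < n := Nat.lt_of_succ_le (by omega)
      have h1 := ih (le_of_lt hid)
      have h2 := h_cons _ _ (h_edge (i+d) hid)
      have h3 := h_opt (i+d) hid
      have : i + (d+1) = (i+d) + 1 := by omega
      rw [this, h3]; linarith
  by_cases hall : ∀ k ≤ n, p k ∈ Expanded
  · have := claim1 n le_rfl (fun k hk => hall k (le_of_lt hk))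
    rw [hpn] at this
    nlinarith [hgstar_nonneg s]
  · push_neg at hall
    classical
    have hne : ∃ k, k ≤ n ∧ p k ∉ Expanded := hall
    set i := Nat.find hne with hi
    obtain ⟨hin, hiopen⟩ := Nat.find_spec hne
    have hmin : ∀ k < i, p k ∈ Expanded := by
      intro k hk
      by_contra hko
      exact absurd ⟨le_trans (le_of_lt hk) hin, hko⟩ (Nat.find_min hne hk)
    have hgi : g (p i) ≤ gstar (p i) := claim1 i hin hmin
    have hkey := h_key i hin hiopen
    have h2 : h (p i) ≤ (gstar (p n) - gstar (p i)) + h (p n) := by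
      have := claim2 i (n - i) (by omega)
      rwa [show i + (n - i) = n by omega] at this
    rw [hpn] at h2
    nlinarith [hgstar_nonneg (p i), hh_nonneg s, hh_nonneg (p i)]
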